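/- arXiv:1806.01051 — 4 statements merged into one kernel-verified Lean document; each statement's English description precedes it below -/
import Mathlib

section
/- Let X and Y be real normed spaces and T : X → Y a bounded linear operator. For x ∈ X with ‖x‖ = 1, x ∈ M_T if and only if there exist semi-inner-products [·,·]_X on X and [·,·]_Y on Y (each generating the respective norm) such that [Tz, Tx]_Y = ‖T‖² [z, x]_X for every z ∈ X. -/
/-- A semi-inner-product generating the norm on a real normed space. -/
def IsSemiInnerProduct {X : Type*} [NormedAddCommGroup X] [NormedSpace ℝ X]
    (p : X → X → ℝ) : Prop :=
  (∀ x y z : X, p (x + y) z = p x z + p y z) ∧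
  (∀ (l : ℝ) (x y : X), p (l • x) y = l * p x y) ∧
  (∀ (l : ℝ) (x y : X), p x (l • y) = l * p x y) ∧
  (∀ x : X, p x x = ‖x‖ ^ 2) ∧
  (∀ x y : X, (p x y) ^ 2 ≤ p x x * p y y)

private def raySetoid (X : Type*) [NormedAddCommGroup X] [NormedSpace ℝ X] : Setoid X where
  r y z := ∃ l : ℝ, l ≠ 0 ∧ z = l • y
  iseqv := ⟨fun y => ⟨1, one_ne_zero, (one_smul ℝ y).symm⟩,
    fun {y z} h => by
      obtain ⟨l, hl, h⟩ := h
      exact ⟨l⁻¹, inv_ne_zero hl, by rw [h, smul_smul, inv_mul_cancel₀ hl, one_smul]⟩,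
    fun {a b c} h h' => by
      obtain ⟨l, hl, h⟩ := h
      obtain ⟨m, hm, h'⟩ := h'
      exact ⟨m * l, mul_ne_zero hm hl, by rw [h', h, smul_smul]⟩⟩

/-- A homogeneous selection of supporting functionals, agreeing with a prescribed
supporting functional `f₀` at the point `x₀`. -/
private lemma exists_selection {X : Type*} [NormedAddCommGroup X] [NormedSpace ℝ X]
    (x₀ : X) (f₀ : X →L[ℝ] ℝ) (h1 : f₀ x₀ = ‖x₀‖ ^ 2)
    (h2 : ∀ z, |f₀ z| ≤ ‖x₀‖ * ‖z‖) :
    ∃ F : X → (X →L[ℝ] ℝ),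
      (∀ (l : ℝ) (y : X), F (l • y) = l • F y) ∧
      (∀ y : X, F y y = ‖y‖ ^ 2) ∧
      (∀ y z : X, |F y z| ≤ ‖y‖ * ‖z‖) ∧
      F x₀ = f₀ := by
  classical
  set s := raySetoid X with hs
  -- supporting functionals at nonzero points, pinned on the ray of x₀
  have hg : ∀ r : X, r ≠ 0 → ∃ g : X →L[ℝ] ℝ, g r = ‖r‖ ^ 2 ∧ (∀ z, |g z| ≤ ‖r‖ * ‖z‖) ∧
      (∀ μ : ℝ, μ ≠ 0 → r = μ • x₀ → g = μ • f₀) := by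
    intro r hr
    by_cases hray : ∃ μ : ℝ, μ ≠ 0 ∧ r = μ • x₀
    · obtain ⟨μ, hμ, hrμ⟩ := hray
      have hx₀ : x₀ ≠ 0 := by
        rintro rfl; exact hr (by rw [hrμ, smul_zero])
      refine ⟨μ • f₀, ?_, ?_, ?_⟩
      · rw [hrμ]
        simp only [ContinuousLinearMap.smul_apply, map_smul, smul_eq_mul, h1,
          norm_smul, Real.norm_eq_abs, mul_pow, sq_abs]
        ring
      · intro z
        have := h2 z
        rw [hrμ, norm_smul, Real.norm_eq_abs]
        simp only [ContinuousLinearMap.smul_apply, smul_eq_mul, abs_mul]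
        calc |μ| * |f₀ z| ≤ |μ| * (‖x₀‖ * ‖z‖) := by
              exact mul_le_mul_of_nonneg_left (h2 z) (abs_nonneg μ)
          _ = |μ| * ‖x₀‖ * ‖z‖ := by ring
      · intro μ' hμ' hrμ'
        have : μ = μ' := by
          have h' : μ • x₀ = μ' • x₀ := by rw [← hrμ, ← hrμ']
          exact smul_left_injective ℝ hx₀ h'
        rw [this]
    · obtain ⟨g, hg1, hg2⟩ := exists_dual_vector ℝ r (norm_ne_zero_iff.mpr hr)
      refine ⟨‖r‖ • g, ?_, ?_, ?_⟩
      · simp only [ContinuousLinearMap.smul_apply, smul_eq_mul, hg2,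
          RCLike.ofReal_real_eq_id, id]
        ring
      · intro z
        simp only [ContinuousLinearMap.smul_apply, smul_eq_mul, abs_mul, abs_norm]
        have : |g z| ≤ ‖z‖ := by
          calc |g z| = ‖g z‖ := (Real.norm_eq_abs _).symm
            _ ≤ ‖g‖ * ‖z‖ := g.le_opNorm z
            _ = ‖z‖ := by rw [hg1, one_mul]
        exact mul_le_mul_of_nonneg_left this (norm_nonneg r)
      · intro μ hμ hrμ
        exact absurd ⟨μ, hμ, hrμ⟩ hray
  let G : X → (X →L[ℝ] ℝ) := fun r => if h : r = 0 then 0 else (hg r h).choose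
  have hG1 : ∀ r : X, r ≠ 0 → G r r = ‖r‖ ^ 2 := fun r hr => by
    simp only [G, dif_neg hr]; exact (hg r hr).choose_spec.1
  have hG2 : ∀ r : X, ∀ z, |G r z| ≤ ‖r‖ * ‖z‖ := fun r z => by
    by_cases hr : r = 0
    · simp [G, hr]
    · simp only [G, dif_neg hr]; exact (hg r hr).choose_spec.2.1 z
  have hG3 : ∀ r : X, r ≠ 0 → ∀ μ : ℝ, μ ≠ 0 → r = μ • x₀ → G r = μ • f₀ := fun r hr => by
    simp only [G, dif_neg hr]; exact (hg r hr).choose_spec.2.2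
  -- representative and scalar
  have hrel : ∀ y : X, ∃ l : ℝ, l ≠ 0 ∧ y = l • (Quotient.mk s y).out :=
    fun y => Quotient.exact (Quotient.out_eq (Quotient.mk s y))
  let lam : X → ℝ := fun y => (hrel y).choose
  let rep : X → X := fun y => (Quotient.mk s y).out
  have hlam : ∀ y : X, lam y ≠ 0 ∧ y = lam y • rep y := fun y => (hrel y).choose_spec
  have hrep0 : ∀ y : X, y ≠ 0 → rep y ≠ 0 := by
    intro y hy hr
    exact hy (by rw [(hlam y).2, hr, smul_zero])
  have hrep_smul : ∀ (l : ℝ), l ≠ 0 → ∀ y : X, rep (l • y) = rep y := by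
    intro l hl y
    have : Quotient.mk s (l • y) = Quotient.mk s y :=
      Quotient.sound (Setoid.symm ⟨l, hl, rfl⟩)
    simp only [rep, this]
  let F : X → (X →L[ℝ] ℝ) := fun y => lam y • G (rep y)
  have hF0 : F 0 = 0 := by
    have h0 : rep (0 : X) = 0 :=
      (smul_eq_zero.mp (hlam (0 : X)).2.symm).resolve_left (hlam (0 : X)).1
    simp [F, h0, G]
  refine ⟨F, ?_, ?_, ?_, ?_⟩
  · -- homogeneity
    intro l y
    by_cases hl : l = 0
    · rw [hl, zero_smul, zero_smul, hF0]
    by_cases hy : y = 0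
    · rw [hy, smul_zero, hF0, smul_zero]
    have hly : l • y ≠ 0 := smul_ne_zero hl hy
    have hrr : rep (l • y) = rep y := hrep_smul l hl y
    have hlameq : lam (l • y) = l * lam y := by
      have h1 := (hlam (l • y)).2
      rw [hrr] at h1
      have h2 : l • y = (l * lam y) • rep y := by
        rw [mul_smul, ← (hlam y).2]
      exact smul_left_injective ℝ (hrep0 y hy) (h1.symm.trans h2)
    simp only [F, hrr, hlameq, mul_smul]
  · -- F y y = ‖y‖²
    intro y
    by_cases hy : y = 0
    · rw [hy, hF0]; simp
    have h1 := (hlam y).2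
    have h2 := hG1 (rep y) (hrep0 y hy)
    have e1 : (G (rep y)) y = lam y * ‖rep y‖ ^ 2 := by
      have e := congrArg (fun w => (G (rep y)) w) h1
      rw [e, map_smul, smul_eq_mul, h2]
    have e2 : ‖y‖ = |lam y| * ‖rep y‖ := by
      rw [congrArg norm h1, norm_smul, Real.norm_eq_abs]
    simp only [F, ContinuousLinearMap.smul_apply, smul_eq_mul, e1, e2, mul_pow, sq_abs]
    ring
  · -- bound
    intro y z
    simp only [F, ContinuousLinearMap.smul_apply, smul_eq_mul, abs_mul]
    calc |lam y| * |G (rep y) z| ≤ |lam y| * (‖rep y‖ * ‖z‖) :=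
          mul_le_mul_of_nonneg_left (hG2 (rep y) z) (abs_nonneg _)
      _ = ‖lam y • rep y‖ * ‖z‖ := by rw [norm_smul, Real.norm_eq_abs]; ring
      _ = ‖y‖ * ‖z‖ := by rw [← (hlam y).2]
  · -- F x₀ = f₀
    by_cases hx₀ : x₀ = 0
    · rw [hx₀, hF0]
      ext z
      have := h2 z
      rw [hx₀, norm_zero, zero_mul] at this
      have : f₀ z = 0 := by
        have h0 := le_antisymm this (abs_nonneg _)
        exact abs_eq_zero.mp h0
      simp [this]
    have hr := hrep0 x₀ hx₀
    have h1 := (hlam x₀).2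
    have hμ : rep x₀ = (lam x₀)⁻¹ • x₀ := by
      have e : (lam x₀)⁻¹ • x₀ = (lam x₀)⁻¹ • (lam x₀ • rep x₀) := by rw [← h1]
      rw [e, smul_smul, inv_mul_cancel₀ (hlam x₀).1, one_smul]
    have h3 := hG3 (rep x₀) hr (lam x₀)⁻¹ (inv_ne_zero (hlam x₀).1) hμ
    simp only [F, h3, smul_smul, mul_inv_cancel₀ (hlam x₀).1, one_smul]

private lemma exists_sip_at {X : Type*} [NormedAddCommGroup X] [NormedSpace ℝ X]
    (x₀ : X) (f₀ : X →L[ℝ] ℝ) (h1 : f₀ x₀ = ‖x₀‖ ^ 2)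
    (h2 : ∀ z, |f₀ z| ≤ ‖x₀‖ * ‖z‖) :
    ∃ p : X → X → ℝ, IsSemiInnerProduct p ∧ ∀ z, p z x₀ = f₀ z := by
  obtain ⟨F, hFh, hFd, hFb, hFx⟩ := exists_selection x₀ f₀ h1 h2
  refine ⟨fun z y => F y z, ⟨?_, ?_, ?_, ?_, ?_⟩, ?_⟩
  · intro a b c; exact map_add (F c) a b
  · intro l a b; exact map_smul (F b) l a
  · intro l a b
    show F (l • b) a = l * F b a
    rw [hFh l b]
    rfl
  · intro a; exact hFd a
  · intro a b
    show (F b) a ^ 2 ≤ (F a) a * (F b) b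
    rw [hFd a, hFd b]
    calc (F b a) ^ 2 = |F b a| ^ 2 := (sq_abs _).symm
      _ ≤ (‖b‖ * ‖a‖) ^ 2 := by
          apply pow_le_pow_left₀ (abs_nonneg _) (hFb b a)
      _ = ‖a‖ ^ 2 * ‖b‖ ^ 2 := by ring
  · intro z
    show (F x₀) z = f₀ z
    rw [hFx]

theorem stmt_1 {X Y : Type*} [NormedAddCommGroup X] [NormedSpace ℝ X]
    [NormedAddCommGroup Y] [NormedSpace ℝ Y]
    (T : X →L[ℝ] Y) (x : X) (hx : ‖x‖ = 1) :
    ‖T x‖ = ‖T‖ ↔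
      ∃ (pX : X → X → ℝ) (pY : Y → Y → ℝ),
        IsSemiInnerProduct pX ∧ IsSemiInnerProduct pY ∧
        ∀ z : X, pY (T z) (T x) = ‖T‖ ^ 2 * pX z x := by
  constructor
  · intro hTx
    by_cases hT : ‖T‖ = 0
    · -- T = 0
      have hT0 : ∀ z : X, T z = 0 := by
        intro z
        have := T.le_opNorm z
        rw [hT, zero_mul] at this
        exact norm_le_zero_iff.mp this
      obtain ⟨pX, hpX, _⟩ := exists_sip_at (0 : X) 0 (by simp) (by simp)
      obtain ⟨pY, hpY, hpY0⟩ := exists_sip_at (0 : Y) 0 (by simp) (by simp)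
      refine ⟨pX, pY, hpX, hpY, fun z => ?_⟩
      rw [hT0 z, hT0 x, hT]
      have := hpY0 0
      simpa using this
    · have hTx0 : T x ≠ 0 := by
        intro h
        rw [h, norm_zero] at hTx
        exact hT hTx.symm
      obtain ⟨g, hg1, hg2⟩ := exists_dual_vector ℝ (T x) (norm_ne_zero_iff.mpr hTx0)
      -- pY with supporting functional ‖T‖ • g at T x
      have hgy1 : (‖T‖ • g) (T x) = ‖T x‖ ^ 2 := by
        simp only [ContinuousLinearMap.smul_apply, smul_eq_mul, hg2, hTx,
          RCLike.ofReal_real_eq_id, id]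
        ring
      have hgy2 : ∀ w, |(‖T‖ • g) w| ≤ ‖T x‖ * ‖w‖ := by
        intro w
        simp only [ContinuousLinearMap.smul_apply, smul_eq_mul, abs_mul, abs_norm, hTx]
        refine mul_le_mul_of_nonneg_left ?_ (norm_nonneg T)
        calc |g w| = ‖g w‖ := (Real.norm_eq_abs _).symm
          _ ≤ ‖g‖ * ‖w‖ := g.le_opNorm w
          _ = ‖w‖ := by rw [hg1, one_mul]
      obtain ⟨pY, hpY, hpYx⟩ := exists_sip_at (T x) (‖T‖ • g) hgy1 hgy2
      -- pX with supporting functional ‖T‖⁻¹ • (g ∘ T) at x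
      have hfx1 : ((‖T‖⁻¹) • (g.comp T)) x = ‖x‖ ^ 2 := by
        simp only [ContinuousLinearMap.smul_apply, ContinuousLinearMap.comp_apply,
          smul_eq_mul, hg2, hTx, hx, RCLike.ofReal_real_eq_id, id]
        rw [inv_mul_cancel₀ hT]
        norm_num
      have hfx2 : ∀ z, |((‖T‖⁻¹) • (g.comp T)) z| ≤ ‖x‖ * ‖z‖ := by
        intro z
        simp only [ContinuousLinearMap.smul_apply, ContinuousLinearMap.comp_apply,
          smul_eq_mul, abs_mul, hx, one_mul]
        have hb : |g (T z)| ≤ ‖T‖ * ‖z‖ := by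
          calc |g (T z)| = ‖g (T z)‖ := (Real.norm_eq_abs _).symm
            _ ≤ ‖g‖ * ‖T z‖ := g.le_opNorm _
            _ = ‖T z‖ := by rw [hg1, one_mul]
            _ ≤ ‖T‖ * ‖z‖ := T.le_opNorm z
        calc |‖T‖⁻¹| * |g (T z)| ≤ |‖T‖⁻¹| * (‖T‖ * ‖z‖) :=
              mul_le_mul_of_nonneg_left hb (abs_nonneg _)
          _ = ‖T‖⁻¹ * ‖T‖ * ‖z‖ := by
              rw [abs_of_nonneg (inv_nonneg.mpr (norm_nonneg T))]; ring
          _ = ‖z‖ := by rw [inv_mul_cancel₀ hT, one_mul]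
      obtain ⟨pX, hpX, hpXx⟩ := exists_sip_at x ((‖T‖⁻¹) • (g.comp T)) hfx1 hfx2
      refine ⟨pX, pY, hpX, hpY, fun z => ?_⟩
      rw [hpYx (T z), hpXx z]
      simp only [ContinuousLinearMap.smul_apply, ContinuousLinearMap.comp_apply, smul_eq_mul]
      field_simp
  · rintro ⟨pX, pY, hpX, hpY, h⟩
    have h1 := h x
    rw [hpY.2.2.2.1 (T x), hpX.2.2.2.1 x, hx] at h1
    have h2 : ‖T x‖ ^ 2 = ‖T‖ ^ 2 := by rw [h1]; ring
    nlinarith [norm_nonneg (T x), norm_nonneg T]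
end

section
/- Let X and Y be real Banach spaces and T : X → Y a nonzero bounded linear operator. If x ∈ m_T, then T(x⁺) ⊆ (Tx)⁺ and T(x⁻) ⊆ (Tx)⁻; that is, for every y ∈ X: if ‖x + t y‖ ≥ ‖x‖ for all t ≥ 0, then ‖Tx + t Ty‖ ≥ ‖Tx‖ for all t ≥ 0, and if ‖x + t y‖ ≥ ‖x‖ for all t ≤ 0, then ‖Tx + t Ty‖ ≥ ‖Tx‖ for all t ≤ 0. -/
/-- The minimum norm of a bounded linear operator. -/
noncomputable def minNorm {X Y : Type*} [NormedAddCommGroup X] [NormedSpace ℝ X]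
    [NormedAddCommGroup Y] [NormedSpace ℝ Y] (T : X →L[ℝ] Y) : ℝ :=
  sInf {r : ℝ | ∃ x : X, ‖x‖ = 1 ∧ r = ‖T x‖}

lemma minNorm_le {X Y : Type*} [NormedAddCommGroup X] [NormedSpace ℝ X]
    [NormedAddCommGroup Y] [NormedSpace ℝ Y] (T : X →L[ℝ] Y) (z : X) (hz : ‖z‖ = 1) :
    minNorm T ≤ ‖T z‖ := by
  apply csInf_le
  · exact ⟨0, fun r ⟨w, _, hr⟩ => hr ▸ norm_nonneg _⟩
  · exact ⟨z, hz, rfl⟩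

lemma key {X Y : Type*} [NormedAddCommGroup X] [NormedSpace ℝ X]
    [NormedAddCommGroup Y] [NormedSpace ℝ Y] (T : X →L[ℝ] Y)
    (x : X) (hx : ‖x‖ = 1) (hxm : ‖T x‖ = minNorm T) (y : X) (t : ℝ)
    (h : ‖x‖ ≤ ‖x + t • y‖) : ‖T x‖ ≤ ‖T x + t • T y‖ := by
  have hpos : (0:ℝ) < ‖x + t • y‖ := lt_of_lt_of_le (by rw [hx]; norm_num) h
  set z := ‖x + t • y‖⁻¹ • (x + t • y) with hzdef
  have hz : ‖z‖ = 1 := by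
    rw [hzdef, norm_smul, norm_inv, norm_norm, inv_mul_cancel₀ hpos.ne']
  have h1 : ‖T x‖ ≤ ‖T z‖ := hxm ▸ minNorm_le T z hz
  have h2 : ‖T z‖ = ‖x + t • y‖⁻¹ * ‖T (x + t • y)‖ := by
    rw [hzdef, map_smul, norm_smul, norm_inv, norm_norm]
  have h3 : T (x + t • y) = T x + t • T y := by simp
  rw [h2, h3] at h1
  calc ‖T x‖ ≤ ‖x + t • y‖⁻¹ * ‖T x + t • T y‖ := h1
    _ ≤ 1 * ‖T x + t • T y‖ := by
        apply mul_le_mul_of_nonneg_right _ (norm_nonneg _)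
        rw [inv_le_one_iff₀]; right; exact hx ▸ h
    _ = ‖T x + t • T y‖ := one_mul _

theorem stmt_2 {X Y : Type*} [NormedAddCommGroup X] [NormedSpace ℝ X]
    [CompleteSpace X] [Nontrivial X]
    [NormedAddCommGroup Y] [NormedSpace ℝ Y] [CompleteSpace Y]
    (T : X →L[ℝ] Y) (hT : T ≠ 0)
    (x : X) (hx : ‖x‖ = 1) (hxm : ‖T x‖ = minNorm T) (y : X) :
    ((∀ t : ℝ, 0 ≤ t → ‖x‖ ≤ ‖x + t • y‖) →
      ∀ t : ℝ, 0 ≤ t → ‖T x‖ ≤ ‖T x + t • T y‖) ∧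
    ((∀ t : ℝ, t ≤ 0 → ‖x‖ ≤ ‖x + t • y‖) →
      ∀ t : ℝ, t ≤ 0 → ‖T x‖ ≤ ‖T x + t • T y‖) := by
  exact ⟨fun h t ht => key T x hx hxm y t (h t ht),
         fun h t ht => key T x hx hxm y t (h t ht)⟩
end

section
/- Let X be a nontrivial finite-dimensional Banach space over 𝕜 (𝕜 = ℝ or ℂ) and let T : X → X be a bounded linear operator. Then there exists x ∈ X with ‖x‖ = 1 such that T preserves Birkhoff–James orthogonality at x, i.e., for every y ∈ X, x ⊥_B y implies Tx ⊥_B Ty. -/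
/-- Birkhoff–James orthogonality over the field `𝕜`. -/
def BirkhoffOrth (𝕜 : Type*) {X : Type*} [RCLike 𝕜] [NormedAddCommGroup X]
    [NormedSpace 𝕜 X] (x y : X) : Prop :=
  ∀ lam : 𝕜, ‖x‖ ≤ ‖x + lam • y‖

theorem stmt_4 {𝕜 X : Type*} [RCLike 𝕜]
    [NormedAddCommGroup X] [NormedSpace 𝕜 X] [FiniteDimensional 𝕜 X] [Nontrivial X]
    (T : X →L[𝕜] X) :
    ∃ x : X, ‖x‖ = 1 ∧ ∀ y : X, BirkhoffOrth 𝕜 x y → BirkhoffOrth 𝕜 (T x) (T y) := by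
  -- choose x minimizing ‖T x‖ on the unit sphere
  obtain ⟨v, hv⟩ := exists_ne (0 : X)
  have hvn : ‖v‖ ≠ 0 := norm_ne_zero_iff.mpr hv
  have hx0' : (‖v‖⁻¹ : 𝕜) • v ∈ Metric.sphere (0 : X) 1 := by
    simp [Metric.mem_sphere, dist_eq_norm, norm_smul, inv_mul_cancel₀ hvn]
  have : ProperSpace X := FiniteDimensional.proper 𝕜 X
  have hcomp : IsCompact (Metric.sphere (0 : X) 1) := isCompact_sphere 0 1
  have hcont : ContinuousOn (fun z : X => ‖T z‖) (Metric.sphere (0 : X) 1) :=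
    (T.continuous.norm).continuousOn
  obtain ⟨x, hxmem, hxmin⟩ := hcomp.exists_isMinOn ⟨_, hx0'⟩ hcont
  have hx : ‖x‖ = 1 := by simpa [Metric.mem_sphere, dist_eq_norm] using hxmem
  -- key inequality: ‖T z‖ ≥ ‖T x‖ * ‖z‖ for all z
  have key : ∀ z : X, ‖T x‖ * ‖z‖ ≤ ‖T z‖ := by
    intro z
    rcases eq_or_ne z 0 with rfl | hz
    · simp
    · have hzn : ‖z‖ ≠ 0 := norm_ne_zero_iff.mpr hz
      have hmem : (‖z‖⁻¹ : 𝕜) • z ∈ Metric.sphere (0 : X) 1 := by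
        simp [Metric.mem_sphere, dist_eq_norm, norm_smul, inv_mul_cancel₀ hzn]
      have := hxmin hmem
      simp only [Set.mem_setOf_eq, map_smul, norm_smul, norm_inv,
        RCLike.norm_ofReal, abs_norm] at this
      have h2 : ‖T x‖ ≤ ‖z‖⁻¹ * ‖T z‖ := this
      calc ‖T x‖ * ‖z‖ ≤ (‖z‖⁻¹ * ‖T z‖) * ‖z‖ := by
            exact mul_le_mul_of_nonneg_right h2 (norm_nonneg z)
        _ = ‖T z‖ := by field_simp
  refine ⟨x, hx, fun y hy lam => ?_⟩
  have h1 : ‖T x‖ * ‖x + lam • y‖ ≤ ‖T (x + lam • y)‖ := key _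
  have h2 : (1 : ℝ) ≤ ‖x + lam • y‖ := by simpa [hx] using hy lam
  have h3 : ‖T x‖ * 1 ≤ ‖T x‖ * ‖x + lam • y‖ :=
    mul_le_mul_of_nonneg_left h2 (norm_nonneg _)
  have : ‖T (x + lam • y)‖ = ‖T x + lam • T y‖ := by
    simp [map_add, map_smul]
  linarith [h1, h3, this ▸ h1]
end

section
/- Let X be a reflexive, strictly convex real Banach space (the canonical inclusion of X into its double dual is surjective), Y a real Banach space, and T : X → Y a bounded linear operator of rank one (the range of T is a one-dimensional subspace of Y). Then there exists x ∈ X with ‖x‖ = 1 such that M_T = {x, −x}. -/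
set_option maxHeartbeats 1000000


theorem stmt_15 {X Y : Type*}
    [NormedAddCommGroup X] [NormedSpace ℝ X] [CompleteSpace X] [StrictConvexSpace ℝ X]
    [NormedAddCommGroup Y] [NormedSpace ℝ Y] [CompleteSpace Y]
    (hrefl : Function.Surjective (NormedSpace.inclusionInDoubleDual ℝ X))
    (T : X →L[ℝ] Y)
    (hrank : Module.finrank ℝ (LinearMap.range (T : X →ₗ[ℝ] Y)) = 1) :
    ∃ x : X, ‖x‖ = 1 ∧ {z : X | ‖z‖ = 1 ∧ ‖T z‖ = ‖T‖} = {x, -x} := by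
  haveI : Module.Free ℝ (LinearMap.range (T : X →ₗ[ℝ] Y)) :=
    Module.Free.of_divisionRing ℝ _
  -- pick a spanning vector of the range
  obtain ⟨v, hv0, hv⟩ := finrank_eq_one_iff'.mp hrank
  have hvY : (v : Y) ≠ 0 := fun h => hv0 (Subtype.ext h)
  -- a norming functional for v
  obtain ⟨f, hf1, hfv'⟩ := exists_dual_vector ℝ (v : Y) (norm_ne_zero_iff.mpr hvY)
  have hfv : f (v : Y) = ‖(v : Y)‖ := by exact_mod_cast hfv'
  -- key: ‖T x‖ = |f (T x)| for all x
  have key : ∀ x : X, ‖T x‖ = |f (T x)| := by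
    intro x
    obtain ⟨c, hc⟩ := hv ⟨T x, LinearMap.mem_range_self _ x⟩
    have hc' : c • (v : Y) = T x := congrArg Subtype.val hc
    rw [← hc', norm_smul, map_smul, hfv, smul_eq_mul, abs_mul, abs_norm,
      Real.norm_eq_abs]
  set g : X →L[ℝ] ℝ := f.comp T with hg
  have hgx : ∀ x : X, ‖T x‖ = |g x| := key
  have hnorm : ‖g‖ = ‖T‖ := by
    apply le_antisymm
    · apply ContinuousLinearMap.opNorm_le_bound _ (norm_nonneg T)
      intro x
      rw [Real.norm_eq_abs, ← hgx]
      exact T.le_opNorm x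
    · apply ContinuousLinearMap.opNorm_le_bound _ (norm_nonneg g)
      intro x
      rw [hgx, ← Real.norm_eq_abs]
      exact g.le_opNorm x
  have hT0 : T ≠ 0 := by
    intro h
    rw [h] at hrank
    rw [show ((0 : X →L[ℝ] Y) : X →ₗ[ℝ] Y) = 0 from rfl, LinearMap.range_zero,
      finrank_bot] at hrank
    exact one_ne_zero hrank.symm
  have hTpos : 0 < ‖T‖ := norm_pos_iff.mpr hT0
  have hg0 : g ≠ 0 := by
    intro h
    rw [h, norm_zero] at hnorm
    exact hTpos.ne' hnorm.symm
  -- norm attainment via reflexivity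
  obtain ⟨Φ, hΦ1, hΦg⟩ := exists_dual_vector ℝ g (norm_ne_zero_iff.mpr hg0)
  obtain ⟨x₀, hx₀⟩ := hrefl Φ
  have hx₀norm : ‖x₀‖ = 1 := by
    have := (NormedSpace.inclusionInDoubleDualLi ℝ (E := X)).norm_map x₀
    rw [show (NormedSpace.inclusionInDoubleDualLi ℝ (E := X)) x₀
        = NormedSpace.inclusionInDoubleDual ℝ X x₀ from rfl, hx₀, hΦ1] at this
    exact this.symm
  have hgx₀ : g x₀ = ‖g‖ := by
    have h1 : NormedSpace.inclusionInDoubleDual ℝ X x₀ g = g x₀ :=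
      NormedSpace.dual_def ℝ X x₀ g
    rw [← h1, hx₀]
    exact_mod_cast hΦg
  refine ⟨x₀, hx₀norm, ?_⟩
  ext z
  simp only [Set.mem_setOf_eq, Set.mem_insert_iff, Set.mem_singleton_iff]
  constructor
  · rintro ⟨hz1, hz2⟩
    rw [hgx z, ← hnorm] at hz2
    have habs := abs_choice (g z)
    -- uniqueness via strict convexity
    have uniq : ∀ w : X, ‖w‖ = 1 → g w = ‖g‖ → w = x₀ := by
      intro w hw1 hw2
      have hsum : g (x₀ + w) = 2 * ‖g‖ := by rw [map_add, hgx₀, hw2]; ring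
      have hle : 2 * ‖g‖ ≤ ‖g‖ * ‖x₀ + w‖ := by
        calc 2 * ‖g‖ = g (x₀ + w) := hsum.symm
        _ ≤ |g (x₀ + w)| := le_abs_self _
        _ = ‖g (x₀ + w)‖ := (Real.norm_eq_abs _).symm
        _ ≤ ‖g‖ * ‖x₀ + w‖ := g.le_opNorm _
      have hgpos : 0 < ‖g‖ := by rw [hnorm]; exact hTpos
      have h2le : 2 ≤ ‖x₀ + w‖ := by
        nlinarith
      have heq : ‖x₀ + w‖ = ‖x₀‖ + ‖w‖ := by
        rw [hx₀norm, hw1]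
        exact le_antisymm (by simpa [hx₀norm, hw1] using norm_add_le x₀ w) (by linarith)
      exact (eq_of_norm_eq_of_norm_add_eq (by rw [hx₀norm, hw1]) heq).symm
    rcases habs with h | h
    · left; exact uniq z hz1 (by rw [← h, hz2])
    · right
      have : g (-z) = ‖g‖ := by rw [map_neg, ← hz2, ← h]
      have := uniq (-z) (by rw [norm_neg, hz1]) this
      rw [← this, neg_neg]
  · rintro (rfl | rfl)
    · refine ⟨hx₀norm, ?_⟩
      rw [hgx, hgx₀, abs_norm, hnorm]
    · refine ⟨by rw [norm_neg, hx₀norm], ?_⟩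
      rw [hgx, map_neg, hgx₀, abs_neg, abs_norm, hnorm]
end
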